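/- Let E be a real inner product space, λ > 0, and let 0 ≤ ū < v̄ be real constants. Let Ψ : ℝ → ℝ satisfy Ψ(1) = 1, and let x, ξ : ℝ → E be differentiable trajectories such that: (i) ‖ξ'(t)‖ ≤ ū for all t; (ii) for every t with e(t) := x(t) − ξ(t) ≠ 0, the velocity obeys the confinement law x'(t) = −(v̄·Ψ(‖e(t)‖/λ)/‖e(t)‖)·e(t); and (iii) ‖e(0)‖ < λ. Then ‖x(t) − ξ(t)‖ < λ for all t ≥ 0. -/

import Mathlib

open Filter Topology

local notation "⟪" a ", " b "⟫" => @inner ℝ _ _ a b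

theorem stageI_confinement
    {E : Type*} [NormedAddCommGroup E] [InnerProductSpace ℝ E]
    (lam : ℝ) (hlam : 0 < lam)
    (ubar vbar : ℝ) (hubar : 0 ≤ ubar) (huv : ubar < vbar)
    (Ψ : ℝ → ℝ) (hΨ1 : Ψ 1 = 1)
    (x ξ : ℝ → E) (hx : Differentiable ℝ x) (hξ : Differentiable ℝ ξ)
    (hξbound : ∀ t : ℝ, ‖deriv ξ t‖ ≤ ubar)
    (hlaw : ∀ t : ℝ, x t - ξ t ≠ 0 →
      deriv x t = -(vbar * Ψ (‖x t - ξ t‖ / lam) / ‖x t - ξ t‖) • (x t - ξ t))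
    (h0 : ‖x 0 - ξ 0‖ < lam) :
    ∀ t : ℝ, 0 ≤ t → ‖x t - ξ t‖ < lam := by
  set e : ℝ → E := fun s => x s - ξ s with he
  have hediff : Differentiable ℝ e := hx.sub hξ
  have hecont : Continuous e := hediff.continuous
  intro t ht
  by_contra hcon
  push_neg at hcon
  set S : Set ℝ := Set.Ici 0 ∩ (fun s => ‖e s‖) ⁻¹' Set.Ici lam with hS
  have hSne : S.Nonempty := ⟨t, ht, hcon⟩
  have hSbdd : BddBelow S := ⟨0, fun s hs => hs.1⟩
  have hSclosed : IsClosed S :=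
    isClosed_Ici.inter (IsClosed.preimage hecont.norm isClosed_Ici)
  set t₀ := sInf S with ht₀
  have ht₀mem : t₀ ∈ S := hSclosed.csInf_mem hSne hSbdd
  have ht₀pos : 0 < t₀ := by
    rcases lt_or_eq_of_le (Set.mem_Ici.1 ht₀mem.1) with h | h
    · exact h
    · exfalso; have := ht₀mem.2; rw [← h] at this
      exact absurd this (not_le.2 h0)
  have hlt : ∀ s, 0 ≤ s → s < t₀ → ‖e s‖ < lam := by
    intro s hs hst
    by_contra hge
    push_neg at hge
    exact absurd (csInf_le hSbdd ⟨hs, hge⟩) (not_le.2 hst)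
  -- boundary equality
  have hle : ‖e t₀‖ ≤ lam := by
    have htend : Tendsto (fun s => ‖e s‖) (𝓝[<] t₀) (𝓝 ‖e t₀‖) :=
      (hecont.norm.continuousAt).continuousWithinAt.tendsto
    refine le_of_tendsto htend ?_
    filter_upwards [Ioo_mem_nhdsLT_of_mem ⟨ht₀pos, le_refl t₀⟩] with s hs
    exact (hlt s hs.1.le hs.2).le
  have heq : ‖e t₀‖ = lam := le_antisymm hle ht₀mem.2
  have hene : e t₀ ≠ 0 := by
    intro h; rw [h, norm_zero] at heq; exact absurd heq.symm (ne_of_gt hlam)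
  -- compute derivative of g = ⟪e, e⟫ at t₀
  have hxd : HasDerivAt x (deriv x t₀) t₀ := (hx t₀).hasDerivAt
  have hξd : HasDerivAt ξ (deriv ξ t₀) t₀ := (hξ t₀).hasDerivAt
  have hed : HasDerivAt e (deriv x t₀ - deriv ξ t₀) t₀ := hxd.sub hξd
  set e' := deriv x t₀ - deriv ξ t₀ with he'
  have hg : HasDerivAt (fun s => ⟪e s, e s⟫) (⟪e t₀, e'⟫ + ⟪e', e t₀⟫) t₀ :=
    hed.inner ℝ hed
  -- derivative is negative
  have hxval : deriv x t₀ = -(vbar / lam) • e t₀ := by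
    have := hlaw t₀ hene
    rw [show x t₀ - ξ t₀ = e t₀ from rfl, heq] at this
    rw [this, div_self (ne_of_gt hlam), hΨ1, mul_one]
  have hinner1 : ⟪e t₀, deriv x t₀⟫ = -(vbar * lam) := by
    rw [hxval, real_inner_smul_right, real_inner_self_eq_norm_sq, heq]
    field_simp
  have hinner2 : -(ubar * lam) ≤ ⟪e t₀, deriv ξ t₀⟫ := by
    have habs : |⟪e t₀, deriv ξ t₀⟫| ≤ ubar * lam := by
      calc |⟪e t₀, deriv ξ t₀⟫| ≤ ‖e t₀‖ * ‖deriv ξ t₀‖ := abs_real_inner_le_norm _ _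
      _ ≤ lam * ubar := by rw [heq]; exact mul_le_mul_of_nonneg_left (hξbound t₀) hlam.le
      _ = ubar * lam := mul_comm _ _
    exact neg_le_of_abs_le habs
  have hDneg : ⟪e t₀, e'⟫ + ⟪e', e t₀⟫ < 0 := by
    have h1 : ⟪e t₀, e'⟫ < 0 := by
      rw [he', inner_sub_right, hinner1]
      nlinarith [mul_pos (sub_pos.2 huv) hlam]
    have h2 : ⟪e', e t₀⟫ = ⟪e t₀, e'⟫ := real_inner_comm _ _
    rw [h2]
    linarith
  -- slope argument
  have hslope := hasDerivAt_iff_tendsto_slope.1 hg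
  have hslope' : Tendsto (slope (fun s => ⟪e s, e s⟫) t₀) (𝓝[<] t₀)
      (𝓝 (⟪e t₀, e'⟫ + ⟪e', e t₀⟫)) :=
    hslope.mono_left (nhdsWithin_mono t₀ (fun s hs => ne_of_lt hs))
  have hev : ∀ᶠ s in 𝓝[<] t₀, slope (fun s => ⟪e s, e s⟫) t₀ s < 0 :=
    hslope'.eventually_lt_const hDneg
  have hev2 : ∀ᶠ s in 𝓝[<] t₀, s ∈ Set.Ioo 0 t₀ :=
    Ioo_mem_nhdsLT_of_mem ⟨ht₀pos, le_refl t₀⟩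
  obtain ⟨s, hs1, hs2⟩ := (hev.and hev2).exists
  -- slope < 0 with s < t₀ gives g s > g t₀
  have hgt : ⟪e s, e s⟫ > ⟪e t₀, e t₀⟫ := by
    have hst : s - t₀ < 0 := sub_neg.2 hs2.2
    have := hs1
    rw [slope_def_field] at this
    rcases div_neg_iff.1 this with ⟨h1, _⟩ | ⟨_, h2⟩
    · linarith
    · linarith
  have hlt2 : ‖e s‖ < lam := hlt s hs2.1.le hs2.2
  have h1 : ⟪e s, e s⟫ < lam ^ 2 := by
    rw [real_inner_self_eq_norm_sq]
    nlinarith [norm_nonneg (e s)]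
  have h2 : ⟪e t₀, e t₀⟫ = lam ^ 2 := by
    rw [real_inner_self_eq_norm_sq, heq]
  linarith [hgt, h1, h2.ge]
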